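/- arXiv:2504.00805 — 4 statements merged into one kernel-verified Lean document; each statement's English description precedes it below -/
import Mathlib

section
/- Define J on the upper half of ℝ² × ℝ⁴ (parameters ξ + iη with η ≥ 0) by the 4×4 matrix with rows (0,-1,0,0), (1,0,0,0), (0,η,0,-1), (η,0,1,0). Then J is an almost complex structure (J² = -Id), is real analytic for η ≥ 0, and its extension by reflection to η < 0 equals the matrix with rows (0,-1,0,0), (1,0,0,0), (0,-η,0,-1), (-η,0,1,0); hence the total extended structure on ℝ² is given by replacing η with |η|, which is Lipschitz-continuous but not C¹. -/
open Matrix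

noncomputable section

/-- The almost complex structure on the upper half space (`η ≥ 0`). -/
def Jup (η : ℝ) : Matrix (Fin 4) (Fin 4) ℝ :=
  !![0, -1, 0, 0; 1, 0, 0, 0; 0, η, 0, -1; η, 0, 1, 0]

/-- The claimed extension by reflection for `η < 0`. -/
def Jdown (η : ℝ) : Matrix (Fin 4) (Fin 4) ℝ :=
  !![0, -1, 0, 0; 1, 0, 0, 0; 0, -η, 0, -1; -η, 0, 1, 0]

/-- The total extended structure, with `η` replaced by `|η|`. -/
def Jtot (η : ℝ) : Matrix (Fin 4) (Fin 4) ℝ :=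
  !![0, -1, 0, 0; 1, 0, 0, 0; 0, |η|, 0, -1; |η|, 0, 1, 0]

/-- Coordinatewise complex conjugation on `ℝ⁴ ≅ ℂ²` (coordinates `x₁,y₁,x₂,y₂`). -/
def conjMat : Matrix (Fin 4) (Fin 4) ℝ :=
  !![1, 0, 0, 0; 0, -1, 0, 0; 0, 0, 1, 0; 0, 0, 0, -1]

/-- The example of a real-analytic almost complex structure whose extension by
reflection (`J̃(ζ)[v] = -conj (J(ζ̄)[v̄])`) is only Lipschitz-continuous:
`J` is a complex structure, real analytic in `η`, its reflection for `η < 0` is `Jdown`,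
the total extended structure is `Jtot` (replace `η` by `|η|`), which is Lipschitz but not
differentiable (hence not `C¹`) at `η = 0`. -/
theorem reflection_of_smooth_structure_only_lipschitz :
    (∀ η : ℝ, Jup η * Jup η = -1) ∧
    (∀ i j : Fin 4, AnalyticOn ℝ (fun η : ℝ => Jup η i j) (Set.Ici 0)) ∧
    (∀ η : ℝ, -(conjMat * Jup (-η) * conjMat) = Jdown η) ∧
    (∀ η : ℝ, 0 ≤ η → Jtot η = Jup η) ∧
    (∀ η : ℝ, η < 0 → Jtot η = Jdown η) ∧
    (∃ K : NNReal, ∀ i j : Fin 4, LipschitzWith K (fun η : ℝ => Jtot η i j)) ∧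
    ¬ (∀ i j : Fin 4, DifferentiableAt ℝ (fun η : ℝ => Jtot η i j) 0) := by

  refine ⟨?_, ?_, ?_, ?_, ?_, ?_, ?_⟩
  · intro η
    ext i j
    fin_cases i <;> fin_cases j <;>
      simp [Jup, Matrix.mul_apply, Fin.sum_univ_four, Matrix.one_apply]
  · intro i j
    have hc : ∀ c : ℝ, AnalyticOn ℝ (fun _ : ℝ => c) (Set.Ici 0) :=
      fun c => analyticOn_const
    have hid : AnalyticOn ℝ (fun η : ℝ => η) (Set.Ici 0) :=
      (analyticOn_id (𝕜 := ℝ))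
    fin_cases i <;> fin_cases j <;> simp [Jup] <;> first | exact hc _ | exact hid
  · intro η
    ext i j
    fin_cases i <;> fin_cases j <;>
      simp [Jup, Jdown, conjMat, Matrix.mul_apply, Fin.sum_univ_four]
  · intro η hη
    ext i j
    fin_cases i <;> fin_cases j <;> simp [Jtot, Jup, abs_of_nonneg hη]
  · intro η hη
    ext i j
    fin_cases i <;> fin_cases j <;> simp [Jtot, Jdown, abs_of_neg hη]
  · refine ⟨1, fun i j => ?_⟩
    have habs : LipschitzWith 1 (fun η : ℝ => |η|) := lipschitzWith_one_norm
    have hc : ∀ c : ℝ, LipschitzWith 1 (fun _ : ℝ => c) := fun c =>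
      (LipschitzWith.const c).weaken (by norm_num)
    fin_cases i <;> fin_cases j <;> simp [Jtot] <;> first | exact hc _ | exact habs
  · intro h
    have := h 2 1
    simp only [Jtot] at this
    have h2 : DifferentiableAt ℝ (fun η : ℝ => |η|) 0 := by
      convert this using 2
      simp
    exact not_differentiableAt_abs_zero h2
end
end

section
/- For an ω_st-tamed linear complex structure J on ℝ^{2n}, set W = L(J) := -(J - J_st)(J + J_st)^{-1} = (1 + J J_st)(1 - J J_st)^{-1}. Then W is J_st-antilinear, i.e., W J_st = -J_st W, and satisfies 1 - Wᵗ W ≫ 0 (positive definite). Conversely, for any W ∈ End(ℝ^{2n}) with W J_st = -J_st W and 1 - Wᵗ W positive definite, the operator J = K(W) := J_st (1 + W)(1 - W)^{-1} is well defined, satisfies J² = -1, and is tamed by ω_st. The maps L and K are mutually inverse, and the set {W : W J_st = -J_st W, 1 - WᵗW ≫ 0} is convex with L(J_st) = 0. -/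
open Matrix

noncomputable section

variable (n : ℕ)

/-- The standard complex structure `J_st` on `ℝ^{2n} = ℝⁿ × ℝⁿ` in block form. -/
def JstM : Matrix (Fin n ⊕ Fin n) (Fin n ⊕ Fin n) ℝ :=
  Matrix.fromBlocks 0 (-1) 1 0

/-- `J` is tamed by the standard symplectic form `ω_st = Σ dxᵢ ∧ dyᵢ`:
`ω_st(v, Jv) = ⟪J_st v, Jv⟫ > 0` for all `v ≠ 0`. -/
def TamedBySt (J : Matrix (Fin n ⊕ Fin n) (Fin n ⊕ Fin n) ℝ) : Prop :=
  ∀ v : Fin n ⊕ Fin n → ℝ, v ≠ 0 → 0 < (JstM n).mulVec v ⬝ᵥ J.mulVec v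

/-- The Cayley-type transform `L(J) = -(J - J_st)(J + J_st)⁻¹`. -/
def cayL (J : Matrix (Fin n ⊕ Fin n) (Fin n ⊕ Fin n) ℝ) :
    Matrix (Fin n ⊕ Fin n) (Fin n ⊕ Fin n) ℝ :=
  -(J - JstM n) * (J + JstM n)⁻¹

/-- The inverse transform `K(W) = J_st (1 + W)(1 - W)⁻¹`. -/
def cayK (W : Matrix (Fin n ⊕ Fin n) (Fin n ⊕ Fin n) ℝ) :
    Matrix (Fin n ⊕ Fin n) (Fin n ⊕ Fin n) ℝ :=
  JstM n * (1 + W) * (1 - W)⁻¹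

/-- The set `𝒲 = {W : W J_st = -J_st W, 1 - Wᵗ W ≫ 0}`. -/
def scrW : Set (Matrix (Fin n ⊕ Fin n) (Fin n ⊕ Fin n) ℝ) :=
  {W | W * JstM n = -(JstM n * W) ∧ (1 - Wᵀ * W).PosDef}

variable {n}

lemma neg_one_blocks : (-1 : Matrix (Fin n ⊕ Fin n) (Fin n ⊕ Fin n) ℝ)
    = Matrix.fromBlocks (-1) 0 0 (-1) := by
  rw [← Matrix.fromBlocks_one, Matrix.fromBlocks_neg, neg_zero]

lemma jst_sq : JstM n * JstM n = -1 := by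
  simp [JstM, Matrix.fromBlocks_multiply, neg_one_blocks]

lemma jst_tr : (JstM n)ᵀ = -(JstM n) := by
  simp only [JstM, Matrix.fromBlocks_transpose, Matrix.fromBlocks_neg, neg_zero, neg_neg,
    Matrix.transpose_zero, Matrix.transpose_one, Matrix.transpose_neg]

lemma jst_det : IsUnit (JstM n).det :=
  Matrix.isUnit_det_of_right_inverse (B := -(JstM n)) (by rw [Matrix.mul_neg, jst_sq, neg_neg])

lemma isUnit_det_of_ker {M : Matrix (Fin n ⊕ Fin n) (Fin n ⊕ Fin n) ℝ}
    (h : ∀ v, M.mulVec v = 0 → v = 0) : IsUnit M.det := by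
  rw [isUnit_iff_ne_zero]
  intro hd
  obtain ⟨v, hv, hv0⟩ := (Matrix.exists_mulVec_eq_zero_iff).2 hd
  exact hv (h v hv0)

lemma mul_cancel_right {A B C : Matrix (Fin n ⊕ Fin n) (Fin n ⊕ Fin n) ℝ}
    (hC : IsUnit C.det) (h : A * C = B * C) : A = B := by
  have h2 := congrArg (· * C⁻¹) h
  simpa [Matrix.mul_assoc, Matrix.mul_nonsing_inv _ hC] using h2

lemma dot_self_nonneg (v : Fin n ⊕ Fin n → ℝ) : 0 ≤ v ⬝ᵥ v :=
  Finset.sum_nonneg fun i _ => mul_self_nonneg _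

lemma dot_self_pos {v : Fin n ⊕ Fin n → ℝ} (hv : v ≠ 0) : 0 < v ⬝ᵥ v :=
  (dot_self_nonneg v).lt_of_ne (fun h => hv (dotProduct_self_eq_zero.1 h.symm)) 

lemma quad_form (W : Matrix (Fin n ⊕ Fin n) (Fin n ⊕ Fin n) ℝ) (v : Fin n ⊕ Fin n → ℝ) :
    v ⬝ᵥ (1 - Wᵀ * W).mulVec v = v ⬝ᵥ v - W.mulVec v ⬝ᵥ W.mulVec v := by
  rw [Matrix.sub_mulVec, dotProduct_sub, Matrix.one_mulVec]
  congr 1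
  rw [← Matrix.mulVec_mulVec, Matrix.dotProduct_mulVec, Matrix.vecMul_transpose]

lemma jst_orth (x y : Fin n ⊕ Fin n → ℝ) :
    (JstM n).mulVec x ⬝ᵥ (JstM n).mulVec y = x ⬝ᵥ y := by
  rw [Matrix.dotProduct_mulVec, ← Matrix.vecMul_transpose, Matrix.vecMul_vecMul, jst_tr,
    Matrix.neg_mul, jst_sq, neg_neg, Matrix.vecMul_one]

lemma jst_mulVec_ne {v : Fin n ⊕ Fin n → ℝ} (hv : v ≠ 0) : (JstM n).mulVec v ≠ 0 := by
  intro h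
  apply hv
  have := congrArg ((JstM n).mulVec) h
  rwa [Matrix.mulVec_mulVec, jst_sq, Matrix.neg_mulVec, Matrix.one_mulVec, Matrix.mulVec_zero,
    neg_eq_zero] at this


lemma tamed_add_det {J : Matrix (Fin n ⊕ Fin n) (Fin n ⊕ Fin n) ℝ} (hT : TamedBySt n J) :
    IsUnit (J + JstM n).det := by
  apply isUnit_det_of_ker
  intro v hv
  by_contra h0
  have ht := hT v h0
  have h1 : J.mulVec v + (JstM n).mulVec v = 0 := by rw [← Matrix.add_mulVec]; exact hv
  rw [eq_neg_of_add_eq_zero_left h1, dotProduct_neg] at ht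
  exact absurd ht (not_lt.2 (neg_nonpos_of_nonneg (dot_self_nonneg _)))

lemma one_sub_A (J : Matrix (Fin n ⊕ Fin n) (Fin n ⊕ Fin n) ℝ) :
    1 - J * JstM n = -((J + JstM n) * JstM n) := by
  rw [add_mul, jst_sq]; noncomm_ring

lemma add_jst_eq (J : Matrix (Fin n ⊕ Fin n) (Fin n ⊕ Fin n) ℝ) :
    J + JstM n = (1 - J * JstM n) * JstM n := by
  rw [sub_mul, one_mul, mul_assoc, jst_sq]; noncomm_ring

lemma one_sub_A_det {J : Matrix (Fin n ⊕ Fin n) (Fin n ⊕ Fin n) ℝ}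
    (h : IsUnit (J + JstM n).det) : IsUnit (1 - J * JstM n).det := by
  rw [one_sub_A, Matrix.det_neg, Matrix.det_mul]
  exact ((isUnit_one.neg).pow _).mul (h.mul jst_det)

lemma cayL_formula {J : Matrix (Fin n ⊕ Fin n) (Fin n ⊕ Fin n) ℝ}
    (h : IsUnit (J + JstM n).det) :
    cayL n J = (1 + J * JstM n) * (1 - J * JstM n)⁻¹ := by
  have h1 := one_sub_A_det h
  apply mul_cancel_right h
  rw [cayL, Matrix.mul_assoc, Matrix.nonsing_inv_mul _ h, mul_one]
  rw [add_jst_eq J, mul_assoc (1 + J * JstM n), ← mul_assoc ((1 - J * JstM n)⁻¹),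
    Matrix.nonsing_inv_mul _ h1, one_mul, add_mul, one_mul, mul_assoc, jst_sq]
  noncomm_ring

lemma mul_cancel_left {A B C : Matrix (Fin n ⊕ Fin n) (Fin n ⊕ Fin n) ℝ}
    (hC : IsUnit C.det) (h : C * A = C * B) : A = B := by
  have h2 := congrArg (C⁻¹ * ·) h
  simpa [← Matrix.mul_assoc, Matrix.nonsing_inv_mul _ hC] using h2

section Part1

variable {J : Matrix (Fin n ⊕ Fin n) (Fin n ⊕ Fin n) ℝ}

lemma A_unit (hJ : J * J = -1) : (J * JstM n) * (JstM n * J) = 1 := by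
  rw [mul_assoc, ← mul_assoc (JstM n), jst_sq, neg_one_mul, mul_neg, hJ, neg_neg]

lemma jst_cancel (X : Matrix (Fin n ⊕ Fin n) (Fin n ⊕ Fin n) ℝ) :
    JstM n * (JstM n * X) = -X := by
  rw [← mul_assoc, jst_sq, neg_one_mul]

lemma AJA (hJ : J * J = -1) :
    (J * JstM n) * (JstM n * (J * JstM n)) = JstM n := by
  simp only [mul_assoc]
  rw [jst_cancel, mul_neg, ← mul_assoc, hJ, neg_one_mul, neg_neg]

lemma P_rel (hJ : J * J = -1) :
    (1 - J * JstM n) * (JstM n * (J * JstM n)) = -(JstM n * (1 - J * JstM n)) := by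
  rw [sub_mul, one_mul, AJA hJ, mul_sub, mul_one]
  abel

lemma key_rel (hJ : J * J = -1) (h1 : IsUnit (1 - J * JstM n).det) :
    (1 - J * JstM n)⁻¹ * JstM n
      = -(JstM n * (J * JstM n) * (1 - J * JstM n)⁻¹) := by
  have key : JstM n * (J * JstM n) * (1 - J * JstM n)⁻¹
      = -((1 - J * JstM n)⁻¹ * JstM n) := by
    apply mul_cancel_right h1
    rw [mul_assoc (JstM n * (J * JstM n)), Matrix.nonsing_inv_mul _ h1, mul_one, neg_mul,
      mul_assoc ((1 - J * JstM n)⁻¹)]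
    apply mul_cancel_left h1
    rw [mul_neg]
    conv_rhs => rw [← mul_assoc]
    rw [Matrix.mul_nonsing_inv _ h1, one_mul]
    exact P_rel hJ
  rw [key, neg_neg]

lemma key2_rel (hJ : J * J = -1) :
    (1 + J * JstM n) * (JstM n * (J * JstM n)) = JstM n * (1 + J * JstM n) := by
  rw [add_mul, one_mul, AJA hJ, mul_add, mul_one]
  abel

lemma anticom (hJ : J * J = -1) (h1 : IsUnit (1 - J * JstM n).det) :
    ((1 + J * JstM n) * (1 - J * JstM n)⁻¹) * JstM n
      = -(JstM n * ((1 + J * JstM n) * (1 - J * JstM n)⁻¹)) := by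
  rw [mul_assoc, key_rel hJ h1, mul_neg,
    ← mul_assoc (1 + J * JstM n) (JstM n * (J * JstM n)) ((1 - J * JstM n)⁻¹),
    key2_rel hJ, mul_assoc]

lemma posdef_part1 (hJ : J * J = -1) (hT : TamedBySt n J)
    (h1 : IsUnit (1 - J * JstM n).det) :
    (1 - ((1 + J * JstM n) * (1 - J * JstM n)⁻¹)ᵀ
        * ((1 + J * JstM n) * (1 - J * JstM n)⁻¹)).PosDef := by
  set W := (1 + J * JstM n) * (1 - J * JstM n)⁻¹ with hW
  refine Matrix.PosDef.of_dotProduct_mulVec_pos ?_ ?_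
  · have h2 : (Wᵀ * W).IsHermitian := by
      rw [← Matrix.conjTranspose_eq_transpose_of_trivial]
      exact Matrix.isHermitian_conjTranspose_mul_self W
    exact Matrix.isHermitian_one.sub h2
  · intro x hx
    rw [show star x = x from star_trivial x, quad_form]
    set u := (1 - J * JstM n)⁻¹ *ᵥ x with hu
    have hxu : x = (1 - J * JstM n) *ᵥ u := by
      rw [hu, Matrix.mulVec_mulVec, Matrix.mul_nonsing_inv _ h1, Matrix.one_mulVec]
    have hWx : W *ᵥ x = (1 + J * JstM n) *ᵥ u := by
      rw [hW, ← Matrix.mulVec_mulVec, ← hu]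
    have hune : u ≠ 0 := fun h0 => hx (by rw [hxu, h0, Matrix.mulVec_zero])
    set y := (JstM n) *ᵥ u with hy
    have hyne : y ≠ 0 := jst_mulVec_ne hune
    have hJyu : (JstM n) *ᵥ y = -u := by
      rw [hy, Matrix.mulVec_mulVec, jst_sq, Matrix.neg_mulVec, Matrix.one_mulVec]
    have hAu : (J * JstM n) *ᵥ u = J *ᵥ y := by rw [hy, ← Matrix.mulVec_mulVec]
    have ht := hT y hyne
    have hdot : u ⬝ᵥ ((J * JstM n) *ᵥ u) = -((JstM n *ᵥ y) ⬝ᵥ (J *ᵥ y)) := by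
      rw [hAu]
      conv_lhs => rw [show u = -((JstM n) *ᵥ y) by rw [hJyu, neg_neg]]
      rw [neg_dotProduct]
    rw [hWx, hxu, Matrix.sub_mulVec, Matrix.add_mulVec, Matrix.one_mulVec]
    set w := (J * JstM n) *ᵥ u with hw
    have h5 : u ⬝ᵥ w < 0 := by rw [hw, hdot]; linarith
    rw [sub_dotProduct, dotProduct_sub, dotProduct_sub,
      add_dotProduct, dotProduct_add, dotProduct_add,
      dotProduct_comm w u]
    linarith

lemma cayK_cayL (hJ : J * J = -1) (hd : IsUnit (J + JstM n).det) :
    cayK n (cayL n J) = J := by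
  have h1 := one_sub_A_det hd
  have hW := cayL_formula hd
  set A := J * JstM n with hA
  set W := cayL n J with hWdef
  have hplus : 1 + W = ((1 - A) + (1 + A)) * (1 - A)⁻¹ := by
    rw [add_mul, Matrix.mul_nonsing_inv _ h1, hW]
  have hminus : 1 - W = ((1 - A) - (1 + A)) * (1 - A)⁻¹ := by
    rw [sub_mul, Matrix.mul_nonsing_inv _ h1, hW]
  have hdiff : (1 - A) - (1 + A) = (-2 : ℝ) • A := by
    rw [neg_smul, two_smul]; abel
  have hAdet : IsUnit A.det := Matrix.isUnit_det_of_right_inverse (A_unit hJ)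
  have hmdet : IsUnit ((1 : Matrix (Fin n ⊕ Fin n) (Fin n ⊕ Fin n) ℝ) - W).det := by
    rw [hminus, Matrix.det_mul, hdiff, Matrix.det_smul]
    exact ((((isUnit_iff_ne_zero).2 (by norm_num : (-2:ℝ) ≠ 0)).pow _).mul hAdet).mul
      (Matrix.isUnit_nonsing_inv_det _ h1)
  apply mul_cancel_right hmdet
  rw [cayK, mul_assoc (JstM n * (1 + W)), Matrix.nonsing_inv_mul _ hmdet, mul_one]
  rw [hplus, hminus, ← mul_assoc, ← mul_assoc]
  congr 1
  have e1 : (1 - A) + (1 + A) = 1 + 1 := by abel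
  have e2 : (1 - A) - (1 + A) = -(A + A) := by abel
  rw [e1, e2, mul_add, mul_one, mul_neg, mul_add, hA]
  simp only [← mul_assoc]
  rw [hJ, neg_one_mul]
  abel

lemma mem_scrW_cayL (hJ : J * J = -1) (hT : TamedBySt n J) : cayL n J ∈ scrW n := by
  have hd := tamed_add_det hT
  have h1 := one_sub_A_det hd
  refine ⟨?_, ?_⟩ <;> rw [cayL_formula hd]
  · exact anticom hJ h1
  · exact posdef_part1 hJ hT h1

section Part2

variable {W : Matrix (Fin n ⊕ Fin n) (Fin n ⊕ Fin n) ℝ}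

lemma scrW_lt (hpd : (1 - Wᵀ * W).PosDef) {v : Fin n ⊕ Fin n → ℝ} (hv : v ≠ 0) :
    (W *ᵥ v) ⬝ᵥ (W *ᵥ v) < v ⬝ᵥ v := by
  have h := hpd.dotProduct_mulVec_pos hv
  rw [show star v = v from star_trivial v, quad_form] at h
  linarith

lemma scrW_one_sub_det (hpd : (1 - Wᵀ * W).PosDef) :
    IsUnit ((1 : Matrix (Fin n ⊕ Fin n) (Fin n ⊕ Fin n) ℝ) - W).det := by
  apply isUnit_det_of_ker
  intro v hv
  by_contra h0
  have h1 : W *ᵥ v = v := by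
    have := hv
    rw [Matrix.sub_mulVec, Matrix.one_mulVec, sub_eq_zero] at this
    exact this.symm
  have := scrW_lt hpd h0
  rw [h1] at this
  exact absurd this (lt_irrefl _)

lemma scrW_one_add_det (hpd : (1 - Wᵀ * W).PosDef) :
    IsUnit ((1 : Matrix (Fin n ⊕ Fin n) (Fin n ⊕ Fin n) ℝ) + W).det := by
  apply isUnit_det_of_ker
  intro v hv
  by_contra h0
  have h1 : W *ᵥ v = -v := by
    have := hv
    rw [Matrix.add_mulVec, Matrix.one_mulVec, add_eq_zero_iff_eq_neg] at this
    exact neg_eq_iff_eq_neg.2 this |>.symm 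
  have := scrW_lt hpd h0
  rw [h1, neg_dotProduct, dotProduct_neg, neg_neg] at this
  exact absurd this (lt_irrefl _)

variable (hac : W * JstM n = -(JstM n * W)) (hpd : (1 - Wᵀ * W).PosDef)
include hac hpd

lemma scrW_comm1 : JstM n * (1 + W) = (1 - W) * JstM n := by
  rw [mul_add, mul_one, sub_mul, one_mul, hac]
  abel

lemma scrW_comm2 : JstM n * (1 - W) = (1 + W) * JstM n := by
  rw [mul_sub, mul_one, add_mul, one_mul, hac]
  abel

lemma scrW_swap : (1 - W)⁻¹ * JstM n = JstM n * (1 + W)⁻¹ := by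
  have hm := scrW_one_sub_det hpd
  have hp := scrW_one_add_det hpd
  apply mul_cancel_right hp
  rw [mul_assoc, scrW_comm1 hac hpd, ← mul_assoc, Matrix.nonsing_inv_mul _ hm, one_mul,
    mul_assoc, Matrix.nonsing_inv_mul _ hp, mul_one]

lemma scrW_step1 : (1 - W)⁻¹ * (JstM n * (1 + W)) = JstM n := by
  rw [scrW_comm1 hac hpd, ← mul_assoc, Matrix.nonsing_inv_mul _ (scrW_one_sub_det hpd), one_mul]

lemma scrW_step2 : JstM n * (1 + W) * JstM n = -(1 - W) := by
  rw [mul_assoc, ← scrW_comm2 hac hpd, ← mul_assoc, jst_sq, neg_one_mul]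

lemma cayK_sq : cayK n W * cayK n W = -1 := by
  have hm := scrW_one_sub_det hpd
  rw [cayK, mul_assoc (JstM n * (1 + W)) ((1 - W)⁻¹),
    ← mul_assoc ((1 - W)⁻¹) (JstM n * (1 + W)) ((1 - W)⁻¹), scrW_step1 hac hpd,
    ← mul_assoc, scrW_step2 hac hpd, neg_mul, Matrix.mul_nonsing_inv _ hm]

lemma cayK_tamed : TamedBySt n (cayK n W) := by
  have hm := scrW_one_sub_det hpd
  intro v hv
  set u := (1 - W)⁻¹ *ᵥ v with hu
  have hvu : v = (1 - W) *ᵥ u := by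
    rw [hu, Matrix.mulVec_mulVec, Matrix.mul_nonsing_inv _ hm, Matrix.one_mulVec]
  have hune : u ≠ 0 := fun h0 => hv (by rw [hvu, h0, Matrix.mulVec_zero])
  have hKv : (cayK n W) *ᵥ v = (JstM n) *ᵥ ((1 + W) *ᵥ u) := by
    rw [cayK, ← Matrix.mulVec_mulVec, ← Matrix.mulVec_mulVec, ← hu]
  rw [hKv, hvu, jst_orth, Matrix.sub_mulVec, Matrix.add_mulVec, Matrix.one_mulVec,
    sub_dotProduct, dotProduct_add, dotProduct_add,
    dotProduct_comm (W *ᵥ u) u]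
  have := scrW_lt hpd hune
  linarith

lemma cayL_cayK : cayL n (cayK n W) = W := by
  have hm := scrW_one_sub_det hpd
  have hp := scrW_one_add_det hpd
  have hAeq : (cayK n W) * JstM n = -((1 - W) * (1 + W)⁻¹) := by
    rw [cayK, mul_assoc (JstM n * (1 + W)), scrW_swap hac hpd, ← mul_assoc,
      scrW_step2 hac hpd, neg_mul]
  have e3 : (1 + W) + (1 - W) = (2 : ℝ) • (1 : Matrix (Fin n ⊕ Fin n) (Fin n ⊕ Fin n) ℝ) := by
    rw [two_smul]; abel
  have h2det : IsUnit ((1 : Matrix (Fin n ⊕ Fin n) (Fin n ⊕ Fin n) ℝ)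
      - cayK n W * JstM n).det := by
    rw [hAeq, sub_neg_eq_add,
      show (1 : Matrix (Fin n ⊕ Fin n) (Fin n ⊕ Fin n) ℝ) + (1 - W) * (1 + W)⁻¹
          = ((1 + W) + (1 - W)) * (1 + W)⁻¹ from by
        rw [add_mul, Matrix.mul_nonsing_inv _ hp],
      e3, Matrix.det_mul, Matrix.det_smul, Matrix.det_one]
    exact ((((isUnit_iff_ne_zero).2 (by norm_num : (2:ℝ) ≠ 0)).pow _).mul isUnit_one).mul
      (Matrix.isUnit_nonsing_inv_det _ hp)
  have hdet : IsUnit (cayK n W + JstM n).det := by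
    rw [add_jst_eq, Matrix.det_mul]
    exact h2det.mul jst_det
  have ha : 1 + cayK n W * JstM n = (W + W) * (1 + W)⁻¹ := by
    rw [hAeq, ← sub_eq_add_neg]
    conv_rhs => rw [show W + W = (1 + W) - (1 - W) from by abel, sub_mul,
      Matrix.mul_nonsing_inv _ hp]
  have hb : 1 - cayK n W * JstM n
      = ((1 : Matrix (Fin n ⊕ Fin n) (Fin n ⊕ Fin n) ℝ) + 1) * (1 + W)⁻¹ := by
    rw [hAeq, sub_neg_eq_add,
      show (1 : Matrix (Fin n ⊕ Fin n) (Fin n ⊕ Fin n) ℝ) + 1 = (1 + W) + (1 - W) from by abel,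
      add_mul, Matrix.mul_nonsing_inv _ hp]
  rw [cayL_formula hdet]
  apply mul_cancel_right h2det
  rw [mul_assoc (1 + cayK n W * JstM n), Matrix.nonsing_inv_mul _ h2det, mul_one, ha, hb,
    ← mul_assoc, mul_add, mul_one]

end Part2

end Part1


lemma scrW_convex : Convex ℝ (scrW n) := by
  rintro W1 ⟨h1a, h1p⟩ W2 ⟨h2a, h2p⟩ a b ha hb hab
  refine ⟨?_, Matrix.PosDef.of_dotProduct_mulVec_pos ?_ ?_⟩
  · simp only [Matrix.add_mul, Matrix.smul_mul, Matrix.mul_add, Matrix.mul_smul, h1a, h2a,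
      smul_neg, neg_add]
  · have h2 : (((a • W1 + b • W2)ᵀ) * (a • W1 + b • W2)).IsHermitian := by
      rw [← Matrix.conjTranspose_eq_transpose_of_trivial]
      exact Matrix.isHermitian_conjTranspose_mul_self _
    exact Matrix.isHermitian_one.sub h2
  · intro x hx
    rw [show star x = x from star_trivial x, quad_form]
    have e : (a • W1 + b • W2) *ᵥ x = a • (W1 *ᵥ x) + b • (W2 *ᵥ x) := by
      rw [Matrix.add_mulVec, Matrix.smul_mulVec, Matrix.smul_mulVec]
    rw [e]
    set u1 := W1 *ᵥ x with hu1
    set u2 := W2 *ᵥ x with hu2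
    have hs1 : u1 ⬝ᵥ u1 < x ⬝ᵥ x := scrW_lt h1p hx
    have hs2 : u2 ⬝ᵥ u2 < x ⬝ᵥ x := scrW_lt h2p hx
    have hd : 0 ≤ u1 ⬝ᵥ u1 - 2 * (u1 ⬝ᵥ u2) + u2 ⬝ᵥ u2 := by
      have h0 := dot_self_nonneg (u1 - u2)
      rw [sub_dotProduct, dotProduct_sub, dotProduct_sub,
        dotProduct_comm u2 u1] at h0
      linarith
    have expand : (a • u1 + b • u2) ⬝ᵥ (a • u1 + b • u2)
        = a * a * (u1 ⬝ᵥ u1) + 2 * (a * b) * (u1 ⬝ᵥ u2) + b * b * (u2 ⬝ᵥ u2) := by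
      simp only [add_dotProduct, dotProduct_add, smul_dotProduct,
        dotProduct_smul, smul_eq_mul, dotProduct_comm u2 u1]
      ring
    rw [expand]
    rcases eq_or_lt_of_le ha with ha0 | hapos
    · have hb1 : b = 1 := by linarith
      rw [← ha0, hb1]
      simpa using hs2
    · have hb' : b = 1 - a := by linarith
      subst hb'
      nlinarith [mul_nonneg (mul_nonneg ha (by linarith : (0:ℝ) ≤ 1 - a)) hd,
        mul_pos hapos (sub_pos.2 hs1),
        mul_nonneg (by linarith : (0:ℝ) ≤ 1 - a) (sub_pos.2 hs2).le]

variable (n)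

/-- The Cayley-transform parametrization of `ω_st`-tamed linear complex structures:
`L` maps tamed complex structures to `𝒲`, with the alternative formula
`L(J) = (1 + J J_st)(1 - J J_st)⁻¹`; `K` maps `𝒲` to tamed complex structures;
`L` and `K` are mutually inverse; `𝒲` is convex and `L(J_st) = 0`. -/
theorem cayley_parametrization_of_tamed_structures :
    (∀ J : Matrix (Fin n ⊕ Fin n) (Fin n ⊕ Fin n) ℝ,
      J * J = -1 → TamedBySt n J →
        cayL n J = (1 + J * JstM n) * (1 - J * JstM n)⁻¹ ∧
        cayL n J ∈ scrW n ∧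
        cayK n (cayL n J) = J) ∧
    (∀ W ∈ scrW n,
        cayK n W * cayK n W = -1 ∧ TamedBySt n (cayK n W) ∧
        cayL n (cayK n W) = W) ∧
    Convex ℝ (scrW n) ∧
    cayL n (JstM n) = 0 := by
  refine ⟨?_, ?_, scrW_convex, by simp [cayL]⟩
  · intro J hJ hT
    have hd := tamed_add_det hT
    exact ⟨cayL_formula hd, mem_scrW_cayL hJ hT, cayK_cayL hJ hd⟩
  · rintro W ⟨hac, hpd⟩
    exact ⟨cayK_sq hac hpd, cayK_tamed hac hpd, cayL_cayK hac hpd⟩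
end
end

section
/- The function u₂(z₁) = exp(-1/z₁^{1/3}) is of class C^∞ on the closed sector S⁺ = {w ∈ Δ⁺ : 0 ≤ Arg w ≤ π/3} (after the substitution w = z₁^{1/3}), with all derivatives tending to 0 as z₁ → 0 in Δ⁺. Consequently, the analytic half-disks C₁ = Δ⁺ × {0} and C₂ = {(z₁, exp(-1/z₁^{1/3})) : z₁ ∈ Δ⁺} in ℂ² are tangent to each other at the boundary point 0 to infinite order. -/
set_option maxHeartbeats 1000000

open Complex Metric Filter Asymptotics
open scoped Real Topology

noncomputable section

/-- The closed upper half of the unit disk `Δ⁺`. -/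
def upperHalfDisk : Set ℂ := {z | z ∈ ball (0 : ℂ) 1 ∧ 0 ≤ z.im}

/-- The sector `S⁺ = {w ∈ Δ⁺ : 0 ≤ Arg w ≤ π/3}`. -/
def sectorS : Set ℂ := {w | w ∈ ball (0 : ℂ) 1 ∧ 0 ≤ w.arg ∧ w.arg ≤ π / 3}

/-- The second half-disk `C₂`'s graph function `u₂(z₁) = exp (-1/z₁^{1/3})`
(principal cube root). -/
def u₂ (z : ℂ) : ℂ := Complex.exp (-(z ^ ((1 : ℂ) / 3))⁻¹)

/-! ### Auxiliary lemmas -/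

/-- Bridge: on an open set where `f` is `ℂ`-smooth, the real iterated Fréchet derivative
has the same norm as the complex iterated derivative. -/
lemma aux_bridge {f : ℂ → ℂ} {U : Set ℂ} (hU : IsOpen U) (hf : ContDiffOn ℂ ⊤ f U)
    {z : ℂ} (hz : z ∈ U) (k : ℕ) :
    ‖iteratedFDeriv ℝ k f z‖ = ‖iteratedDeriv k f z‖ := by
  have hudC : UniqueDiffOn ℂ U := hU.uniqueDiffOn
  have hudR : UniqueDiffOn ℝ U := hU.uniqueDiffOn
  have h1 := hf.ftaylorSeriesWithin hudC
  have h2 := h1.restrictScalars ℝ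
  have e1 : ftaylorSeriesWithin ℂ f U z k = iteratedFDerivWithin ℂ k f U z :=
    h1.eq_iteratedFDerivWithin_of_uniqueDiffOn le_top hudC hz
  have e2 : (ftaylorSeriesWithin ℂ f U z k).restrictScalars ℝ
      = iteratedFDerivWithin ℝ k f U z :=
    h2.eq_iteratedFDerivWithin_of_uniqueDiffOn le_top hudR hz
  calc ‖iteratedFDeriv ℝ k f z‖ = ‖iteratedFDerivWithin ℝ k f U z‖ := by
        rw [iteratedFDerivWithin_of_isOpen k hU hz]
    _ = ‖(ftaylorSeriesWithin ℂ f U z k).restrictScalars ℝ‖ := by rw [e2]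
    _ = ‖ftaylorSeriesWithin ℂ f U z k‖ :=
        ContinuousMultilinearMap.norm_restrictScalars _
    _ = ‖iteratedFDerivWithin ℂ k f U z‖ := by rw [e1]
    _ = ‖iteratedFDeriv ℂ k f z‖ := by rw [iteratedFDerivWithin_of_isOpen k hU hz]
    _ = ‖iteratedDeriv k f z‖ := norm_iteratedFDeriv_eq_norm_iteratedDeriv

open Polynomial in
/-- If `v' = c * v ^ m` on an open set, every iterated derivative of `exp (-v)` is
`Q(v) * exp (-v)` for a polynomial `Q`. -/
lemma aux_keyK {A : Set ℂ} (hA : IsOpen A) {v : ℂ → ℂ} {c : ℂ} {m : ℕ}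
    (hv : ∀ z ∈ A, HasDerivAt v (c * v z ^ m) z) (k : ℕ) :
    ∃ Q : Polynomial ℂ, ∀ z ∈ A,
      iteratedDeriv k (fun z => Complex.exp (-v z)) z = Q.eval (v z) * Complex.exp (-v z) := by
  induction k with
  | zero => exact ⟨1, fun z _ => by simp⟩
  | succ k ih =>
    obtain ⟨Q, hQ⟩ := ih
    refine ⟨C c * X ^ m * (derivative Q - Q), fun z hz => ?_⟩
    rw [iteratedDeriv_succ]
    have hev : iteratedDeriv k (fun z => Complex.exp (-v z))
        =ᶠ[𝓝 z] fun z => Q.eval (v z) * Complex.exp (-v z) :=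
      eventually_of_mem (hA.mem_nhds hz) hQ
    rw [hev.deriv_eq]
    have hvz := hv z hz
    have h1 : HasDerivAt (fun z => Q.eval (v z))
        (Q.derivative.eval (v z) * (c * v z ^ m)) z :=
      (Q.hasDerivAt (v z)).comp z hvz
    have h2 : HasDerivAt (fun z => Complex.exp (-v z))
        (Complex.exp (-v z) * -(c * v z ^ m)) z := hvz.neg.cexp
    have h3 := h1.mul h2
    rw [(show HasDerivAt (fun z => Q.eval (v z) * Complex.exp (-v z)) _ z from h3).deriv]
    simp only [eval_mul, eval_C, eval_pow, eval_X, eval_sub]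
    ring

lemma aux_pow_mul_exp_half (d : ℕ) :
    Tendsto (fun t : ℝ => t ^ d * Real.exp (-(t / 2))) atTop (𝓝 0) := by
  have h1 : Tendsto (fun t : ℝ => t / 2) atTop atTop :=
    tendsto_id.atTop_div_const (by norm_num)
  have h2 := (Real.tendsto_pow_mul_exp_neg_atTop_nhds_zero d).comp h1
  have h3 : Tendsto (fun t : ℝ => (2 : ℝ) ^ d * ((t / 2) ^ d * Real.exp (-(t / 2))))
      atTop (𝓝 ((2:ℝ) ^ d * 0)) := h2.const_mul _
  rw [mul_zero] at h3
  refine h3.congr (fun t => ?_)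
  rw [div_pow, ← mul_assoc, mul_div_cancel₀]
  positivity

open Polynomial in
/-- Decay: `Q(v) * exp (-v) → 0` along any filter where `Re v ≥ ‖v‖/2` and `‖v‖ → ∞`. -/
lemma aux_decay (Q : Polynomial ℂ) {α : Type*} {l : Filter α} {v : α → ℂ}
    (h1 : ∀ᶠ a in l, ‖v a‖ / 2 ≤ (v a).re)
    (h2 : Tendsto (fun a => ‖v a‖) l atTop) :
    Tendsto (fun a => Q.eval (v a) * Complex.exp (-v a)) l (𝓝 0) := by
  obtain ⟨d, S, hQS⟩ : ∃ (d : ℕ) (S : ℝ), ∀ x : ℂ, 1 ≤ ‖x‖ → ‖Q.eval x‖ ≤ S * ‖x‖ ^ d := by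
    refine ⟨Q.natDegree, ∑ i ∈ Finset.range (Q.natDegree + 1), ‖Q.coeff i‖, fun x hx => ?_⟩
    rw [Q.eval_eq_sum_range, Finset.sum_mul]
    refine le_trans (norm_sum_le _ _) (Finset.sum_le_sum (fun i hi => ?_))
    rw [norm_mul, norm_pow]
    have h1' : ‖x‖ ^ i ≤ ‖x‖ ^ Q.natDegree :=
      pow_le_pow_right₀ hx (Nat.lt_succ_iff.mp (Finset.mem_range.mp hi))
    exact mul_le_mul_of_nonneg_left h1' (norm_nonneg _)
  have hbd : Tendsto (fun a => S * (‖v a‖ ^ d * Real.exp (-(‖v a‖ / 2)))) l (𝓝 (S * 0)) :=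
    (((aux_pow_mul_exp_half d).comp h2)).const_mul S
  rw [mul_zero] at hbd
  apply squeeze_zero_norm' _ hbd
  filter_upwards [h1, h2.eventually_ge_atTop 1] with a hre hone
  have hexp : ‖Complex.exp (-v a)‖ ≤ Real.exp (-(‖v a‖ / 2)) := by
    rw [Complex.norm_exp]
    exact Real.exp_le_exp.mpr (by simpa using hre)
  calc ‖Q.eval (v a) * Complex.exp (-v a)‖
      = ‖Q.eval (v a)‖ * ‖Complex.exp (-v a)‖ := norm_mul _ _
    _ ≤ S * ‖v a‖ ^ d * Real.exp (-(‖v a‖ / 2)) :=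
        mul_le_mul (hQS _ hone) hexp (norm_nonneg _)
          (le_trans (norm_nonneg (Q.eval (v a))) (hQS _ hone))
    _ = S * (‖v a‖ ^ d * Real.exp (-(‖v a‖ / 2))) := mul_assoc _ _ _

section BadPoint
variable {F : Type*} [NormedAddCommGroup F] [NormedSpace ℝ F]

lemma aux_dir_bound {f : ℂ → F} {z₀ : ℂ} {r M : ℝ} (hr : 0 < r) (hM : 0 ≤ M)
    (h : ∀ z ∈ ball z₀ r, z.im ≠ 0 → DifferentiableAt ℝ f z ∧ ‖fderiv ℝ f z‖ ≤ M)
    (him : z₀.im = 0) (hd0 : DifferentiableAt ℝ f z₀) {e : ℂ} (he : e.im ≠ 0) :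
    ‖fderiv ℝ f z₀ e‖ ≤ M * ‖e‖ := by
  have he0 : e ≠ 0 := fun h0 => he (by simp [h0])
  have hene : (0:ℝ) < ‖e‖ := norm_pos_iff.mpr he0
  set L := fderiv ℝ f z₀ with hL
  set γ : ℝ → F := fun t => f (z₀ + t • e) with hγ
  have hline : HasDerivAt (fun t : ℝ => z₀ + t • e) e 0 := by
    simpa using (((hasDerivAt_id (0:ℝ)).smul_const e).const_add z₀)
  have h00 : HasFDerivAt f L (z₀ + (0:ℝ) • e) := by
    rw [zero_smul, add_zero]; exact hd0.hasFDerivAt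
  have hγd : HasDerivAt γ (L e) 0 := h00.comp_hasDerivAt 0 hline
  set t₀ : ℝ := r / (2 * ‖e‖) with ht₀
  have ht₀pos : 0 < t₀ := by positivity
  have ht₀e : t₀ * ‖e‖ = r / 2 := by
    rw [ht₀, div_mul_eq_mul_div, mul_comm (2:ℝ) ‖e‖, ← div_div, mul_comm r ‖e‖,
      mul_div_cancel_left₀ r (ne_of_gt hene)]
  -- key segment bound
  have seg : ∀ s t : ℝ, 0 < s → s ≤ t → t < t₀ → ‖γ t - γ s‖ ≤ M * ‖e‖ * t := by
    intro s t hs hst htt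
    have hsub : ∀ x ∈ segment ℝ (z₀ + s • e) (z₀ + t • e), x ∈ ball z₀ r ∧ x.im ≠ 0 := by
      intro x hx
      obtain ⟨a, b, ha, hb, hab, hx⟩ := hx
      have hxe : x = z₀ + (a * s + b * t) • e := by
        rw [← hx]
        have h1 : a • (z₀ + s • e) + b • (z₀ + t • e)
            = (a + b) • z₀ + (a * s + b * t) • e := by
          simp only [smul_add, smul_smul, add_smul]; abel
        rw [h1, hab, one_smul]
      have hτ1 : 0 < a * s + b * t := by
        rcases eq_or_lt_of_le ha with h1 | h1
        · have hb1 : b = 1 := by linarith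
          have : (0:ℝ) < t := lt_of_lt_of_le hs hst
          simp only [← h1, hb1]; nlinarith
        · nlinarith
      have hτ2 : a * s + b * t ≤ t := by nlinarith
      refine ⟨?_, ?_⟩
      · rw [hxe, mem_ball]
        simp only [dist_eq_norm, add_sub_cancel_left]
        rw [norm_smul, Real.norm_eq_abs, abs_of_pos hτ1]
        have hlt : (a*s+b*t) * ‖e‖ < t₀ * ‖e‖ := by
          apply mul_lt_mul_of_pos_right _ hene
          exact lt_of_le_of_lt hτ2 htt
        rw [ht₀e] at hlt
        linarith
      · have : x.im = (a * s + b * t) * e.im := by rw [hxe]; simp [him]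
        rw [this]
        exact mul_ne_zero (ne_of_gt hτ1) he
    have key := (convex_segment (z₀ + s • e) (z₀ + t • e)).norm_image_sub_le_of_norm_fderiv_le
      (fun x hx => (h x (hsub x hx).1 (hsub x hx).2).1)
      (fun x hx => (h x (hsub x hx).1 (hsub x hx).2).2)
      (left_mem_segment ℝ _ _) (right_mem_segment ℝ _ _)
    have hnorm : ‖(z₀ + t • e) - (z₀ + s • e)‖ = (t - s) * ‖e‖ := by
      rw [add_sub_add_left_eq_sub, ← sub_smul, norm_smul, Real.norm_eq_abs,
        _root_.abs_of_nonneg (show (0:ℝ) ≤ t - s by linarith)]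
    rw [hnorm] at key
    have h2 : (t - s) * ‖e‖ ≤ t * ‖e‖ :=
      mul_le_mul_of_nonneg_right (by linarith) (le_of_lt hene)
    calc ‖γ t - γ s‖ ≤ M * ((t - s) * ‖e‖) := key
      _ ≤ M * (t * ‖e‖) := mul_le_mul_of_nonneg_left h2 hM
      _ = M * ‖e‖ * t := by ring
  -- endpoint bound via continuity
  have endpt : ∀ t : ℝ, 0 < t → t < t₀ → ‖γ t - γ 0‖ ≤ M * ‖e‖ * t := by
    intro t ht htt
    have hcont : Tendsto (fun s => ‖γ t - γ s‖) (𝓝[>] (0:ℝ)) (𝓝 ‖γ t - γ 0‖) :=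
      (tendsto_const_nhds.sub (hγd.continuousAt.tendsto.mono_left nhdsWithin_le_nhds)).norm
    refine le_of_tendsto hcont ?_
    filter_upwards [Ioo_mem_nhdsGT_of_mem (Set.mem_Ico.mpr ⟨le_refl 0, ht⟩)] with s hs
    exact seg s t hs.1 hs.2.le htt
  -- slope limit
  have hslope : Tendsto (slope γ 0) (𝓝[>] (0:ℝ)) (𝓝 (L e)) :=
    (hasDerivAt_iff_tendsto_slope.mp hγd).mono_left
      (nhdsWithin_mono _ (fun s hs => ne_of_gt hs))
  refine le_of_tendsto hslope.norm ?_
  filter_upwards [Ioo_mem_nhdsGT_of_mem (Set.mem_Ico.mpr ⟨le_refl 0, ht₀pos⟩)] with s hs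
  rw [slope_def_module, sub_zero, norm_smul, Real.norm_eq_abs, abs_of_pos (inv_pos.mpr hs.1),
    inv_mul_le_iff₀ hs.1]
  rw [mul_comm]
  exact endpt s hs.1 hs.2

/-- At a point of the real axis, the derivative (junk value `0` if not differentiable)
is bounded by `4 M` if `f` is differentiable with derivative bounded by `M` off the axis. -/
lemma aux_badPoint_bound {f : ℂ → F} {z₀ : ℂ} {r M : ℝ} (hr : 0 < r) (hM : 0 ≤ M)
    (h : ∀ z ∈ ball z₀ r, z.im ≠ 0 → DifferentiableAt ℝ f z ∧ ‖fderiv ℝ f z‖ ≤ M)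
    (him : z₀.im = 0) : ‖fderiv ℝ f z₀‖ ≤ 4 * M := by
  by_cases hd0 : DifferentiableAt ℝ f z₀
  · set L := fderiv ℝ f z₀ with hL
    have hI : ‖L I‖ ≤ M := by
      have := aux_dir_bound hr hM h him hd0 (e := I) (by simp)
      simpa using this
    have h1I : ‖L (1 + I)‖ ≤ 2 * M := by
      have := aux_dir_bound hr hM h him hd0 (e := 1 + I) (by simp)
      have hn : ‖(1 + I : ℂ)‖ ≤ 2 := by
        refine le_trans (norm_add_le _ _) ?_
        rw [norm_one, Complex.norm_I]; norm_num
      nlinarith [norm_nonneg (L (1 + I)), this]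
    have h1 : ‖L 1‖ ≤ 3 * M := by
      have : L 1 = L (1 + I) - L I := by rw [← map_sub]; norm_num
      rw [this]
      calc ‖L (1 + I) - L I‖ ≤ ‖L (1 + I)‖ + ‖L I‖ := norm_sub_le _ _
        _ ≤ 3 * M := by linarith
    refine ContinuousLinearMap.opNorm_le_bound _ (by linarith) (fun z => ?_)
    have hz : z = z.re • (1:ℂ) + z.im • I := by
      simp [Complex.real_smul, Complex.re_add_im]
    calc ‖L z‖ = ‖z.re • L 1 + z.im • L I‖ := by rw [← map_smul, ← map_smul, ← map_add, ← hz]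
      _ ≤ ‖z.re • L 1‖ + ‖z.im • L I‖ := norm_add_le _ _
      _ = |z.re| * ‖L 1‖ + |z.im| * ‖L I‖ := by rw [norm_smul, norm_smul]; simp
      _ ≤ ‖z‖ * (3*M) + ‖z‖ * M := by
          have h2 := Complex.abs_re_le_norm z
          have h3 := Complex.abs_im_le_norm z
          have h4 := norm_nonneg (L 1)
          have h5 := norm_nonneg (L I)
          have h6 : |z.re| ≤ ‖z‖ := h2
          have h7 : |z.im| ≤ ‖z‖ := h3
          nlinarith [abs_nonneg z.re, abs_nonneg z.im]
      _ = 4 * M * ‖z‖ := by ring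
  · rw [fderiv_zero_of_not_differentiableAt hd0]
    simp; positivity

end BadPoint

lemma aux_smooth1 : ContDiffOn ℂ ⊤ (fun w : ℂ => Complex.exp (-w⁻¹)) {w : ℂ | w ≠ 0} :=
  fun w hw => ((contDiffAt_id.inv hw).neg.cexp).contDiffWithinAt

lemma aux_ucube {z : ℂ} (hz : z ≠ 0) : (z ^ ((1:ℂ)/3)) ^ 3 = z := by
  rw [Complex.cpow_def_of_ne_zero hz, ← Complex.exp_nat_mul]
  rw [show (3:ℕ) * (Complex.log z * (1/3)) = Complex.log z by push_cast; ring]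
  exact Complex.exp_log hz

lemma aux_upow_ne {z : ℂ} (hz : z ≠ 0) : z ^ ((1:ℂ)/3) ≠ 0 := by
  rw [Complex.cpow_def_of_ne_zero hz]; exact Complex.exp_ne_zero _

lemma aux_log_mul_third_re (z : ℂ) : (Complex.log z * (1/3)).re = Real.log ‖z‖ / 3 := by
  simp [Complex.mul_re, Complex.log_re]
  ring

lemma aux_log_mul_third_im (z : ℂ) : (Complex.log z * (1/3)).im = z.arg / 3 := by
  simp [Complex.mul_im, Complex.log_im]
  ring

lemma aux_unorm {z : ℂ} (hz : z ≠ 0) :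
    ‖z ^ ((1:ℂ)/3)‖ = Real.exp (Real.log ‖z‖ / 3) := by
  rw [Complex.cpow_def_of_ne_zero hz, Complex.norm_exp, aux_log_mul_third_re]

lemma aux_cos_third (z : ℂ) : (1:ℝ)/2 ≤ Real.cos (z.arg / 3) := by
  have h1 : |z.arg / 3| ≤ π/3 := by
    rw [abs_div]
    have := Complex.abs_arg_le_pi z
    rw [show |(3:ℝ)| = 3 by norm_num]
    linarith
  have h2 : Real.cos (π/3) ≤ Real.cos |z.arg / 3| :=
    Real.cos_le_cos_of_nonneg_of_le_pi (abs_nonneg _)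
      (by linarith [Real.pi_pos]) h1
  rw [Real.cos_abs, Real.cos_pi_div_three] at h2
  exact h2

lemma aux_ure {z : ℂ} (hz : z ≠ 0) : ‖z ^ ((1:ℂ)/3)‖ / 2 ≤ (z ^ ((1:ℂ)/3)).re := by
  rw [aux_unorm hz, Complex.cpow_def_of_ne_zero hz, Complex.exp_re, aux_log_mul_third_re,
    aux_log_mul_third_im]
  have h1 := aux_cos_third z
  have h2 : (0:ℝ) < Real.exp (Real.log ‖z‖ / 3) := Real.exp_pos _
  nlinarith

/-- From `‖u‖/2 ≤ u.re`, `u ≠ 0` conclude the same for `u⁻¹`. -/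
lemma aux_inv_re_half {u : ℂ} (hu : u ≠ 0) (h : ‖u‖ / 2 ≤ u.re) : ‖u⁻¹‖ / 2 ≤ (u⁻¹).re := by
  have h1 : (0:ℝ) < ‖u‖ := norm_pos_iff.mpr hu
  have h1' : ‖u‖ ≠ 0 := by exact ne_of_gt h1
  have h3 : (0:ℝ) < ‖u‖ ^ 2 := pow_pos h1 2
  rw [Complex.inv_re, norm_inv, ← Complex.sq_norm]
  have h2 : ‖u‖⁻¹ / 2 = (‖u‖ / 2) / ‖u‖ ^ 2 := by
    field_simp
  rw [h2]
  gcongr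

lemma aux_v_hasDeriv {z : ℂ} (hz : z ∈ Complex.slitPlane) :
    HasDerivAt (fun z : ℂ => (z ^ ((1:ℂ)/3))⁻¹)
      (-(1/3) * ((z ^ ((1:ℂ)/3))⁻¹) ^ 4) z := by
  have hz0 : z ≠ 0 := (Complex.mem_slitPlane_iff_arg.mp hz).2
  have hu0 : z ^ ((1:ℂ)/3) ≠ 0 := aux_upow_ne hz0
  have hcpow : HasDerivAt (fun z : ℂ => z ^ ((1:ℂ)/3)) ((1/3) * z ^ ((1:ℂ)/3 - 1)) z :=
    (Complex.hasStrictDerivAt_cpow_const hz).hasDerivAt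
  have hinv := hcpow.inv hu0
  refine hinv.congr_deriv ?_
  set u := z ^ ((1:ℂ)/3) with hu
  have h3 : u ^ 3 = z := aux_ucube hz0
  rw [Complex.cpow_sub _ _ hz0, Complex.cpow_one, ← hu, ← h3]
  field_simp

lemma aux_u₂eq : ∀ w ∈ Complex.slitPlane,
    Complex.exp (-(Complex.exp (Complex.log w * (1/3)))⁻¹)
      = Complex.exp (-(w ^ ((1 : ℂ) / 3))⁻¹) := by
  intro w hw
  rw [Complex.cpow_def_of_ne_zero (Complex.mem_slitPlane_iff_arg.mp hw).2]

lemma aux_smooth2 : ContDiffOn ℂ ⊤ (fun z : ℂ => Complex.exp (-(z ^ ((1:ℂ)/3))⁻¹))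
    Complex.slitPlane := by
  intro z hz
  have h1 : ContDiffAt ℂ ⊤ Complex.log z := (analyticAt_clog hz).contDiffAt
  have h2 : ContDiffAt ℂ ⊤ (fun w => Complex.exp (Complex.log w * (1/3))) z :=
    (h1.mul contDiffAt_const).cexp
  have h3 : ContDiffAt ℂ ⊤
      (fun w => Complex.exp (-(Complex.exp (Complex.log w * (1/3)))⁻¹)) z :=
    ((h2.inv (Complex.exp_ne_zero _)).neg).cexp
  refine (h3.congr_of_eventuallyEq ?_).contDiffWithinAt
  filter_upwards [Complex.isOpen_slitPlane.mem_nhds hz] with w hw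
  exact (aux_u₂eq w hw).symm

lemma aux_habs_tendsto : Tendsto (fun z : ℂ => ‖z‖) (𝓝[≠] (0:ℂ)) (𝓝[>] 0) := by
  apply tendsto_nhdsWithin_of_tendsto_nhds_of_eventually_within
  · have h := (continuous_norm.tendsto (0:ℂ))
    simpa using h.mono_left nhdsWithin_le_nhds
  · filter_upwards [self_mem_nhdsWithin] with w hw
    exact norm_pos_iff.mpr hw

lemma aux_tendsto_norm_inv : Tendsto (fun w : ℂ => ‖w⁻¹‖) (𝓝[≠] (0:ℂ)) atTop := by
  have h2 := tendsto_inv_nhdsGT_zero.comp aux_habs_tendsto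
  refine h2.congr (fun w => ?_)
  simp [norm_inv]

lemma aux_tendsto_norm_v :
    Tendsto (fun z : ℂ => ‖(z ^ ((1:ℂ)/3))⁻¹‖) (𝓝[≠] (0:ℂ)) atTop := by
  have hlog : Tendsto (fun z : ℂ => Real.log ‖z‖) (𝓝[≠] (0:ℂ)) atBot :=
    Real.tendsto_log_nhdsGT_zero.comp aux_habs_tendsto
  have hdiv : Tendsto (fun z : ℂ => -(Real.log ‖z‖ / 3)) (𝓝[≠] (0:ℂ)) atTop := by
    apply tendsto_neg_atBot_atTop.comp
    exact hlog.atBot_div_const (by norm_num)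
  have hexp := Real.tendsto_exp_atTop.comp hdiv
  refine hexp.congr' ?_
  filter_upwards [self_mem_nhdsWithin] with w hw
  simp only [Function.comp]
  rw [norm_inv, aux_unorm hw, ← Real.exp_neg]


/-- Main tendsto on the good (open) region. -/
lemma aux_good_tendsto {A : Set ℂ} (hA : IsOpen A) {v : ℂ → ℂ} {c : ℂ} {m : ℕ}
    (hv : ∀ z ∈ A, HasDerivAt v (c * v z ^ m) z)
    (hsmooth : ContDiffOn ℂ ⊤ (fun z => Complex.exp (-v z)) A)
    {s : Set ℂ} (hs : s ⊆ A)
    (hs0 : Tendsto (fun z => ‖v z‖) (𝓝[s] 0) atTop)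
    (hre : ∀ z ∈ s, ‖v z‖ / 2 ≤ (v z).re) (k : ℕ) :
    Tendsto (fun z => iteratedFDeriv ℝ k (fun z => Complex.exp (-v z)) z)
      (𝓝[s] 0) (𝓝 0) := by
  obtain ⟨Q, hQ⟩ := aux_keyK hA hv k
  have hdecay := aux_decay Q (l := 𝓝[s] 0) (v := v)
      (by filter_upwards [self_mem_nhdsWithin] with z hz; exact hre z hz) hs0
  have hdn := hdecay.norm
  rw [norm_zero] at hdn
  apply squeeze_zero_norm' _ hdn
  filter_upwards [self_mem_nhdsWithin] with z hz
  rw [aux_bridge hA hsmooth (hs hz) k, hQ z (hs hz)]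

lemma aux_sector_re {w : ℂ} (hw : w ∈ sectorS) (h0 : w ≠ 0) : ‖w‖ / 2 ≤ w.re := by
  have hcos : Real.cos (π/3) ≤ Real.cos w.arg :=
    Real.cos_le_cos_of_nonneg_of_le_pi hw.2.1 (by linarith [Real.pi_pos]) hw.2.2
  rw [Real.cos_pi_div_three] at hcos
  have hc := Complex.cos_arg h0
  rw [hc] at hcos
  have habs : (0:ℝ) < ‖w‖ := norm_pos_iff.mpr h0
  rw [le_div_iff₀ habs] at hcos
  linarith

/-- Analytic half-disks can touch to infinite order at a boundary point:
`e^{-1/w}` has all derivatives tending to `0` as `w → 0` in the sector `S⁺`; after the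
substitution `w = z^{1/3}` the same holds for `u₂` on `Δ⁺`, so the half-disks
`C₁ = Δ⁺ × {0}` and `C₂ = {(z, u₂ z)}` are tangent at `0` to infinite order:
`u₂(z) = O(|z|^m)` for every `m`. -/
theorem infinite_order_boundary_tangency :
    (∀ k : ℕ,
      Tendsto (fun w => iteratedFDeriv ℝ k (fun w : ℂ => Complex.exp (-w⁻¹)) w)
        (𝓝[sectorS \ {0}] 0) (𝓝 0)) ∧
    (∀ k : ℕ,
      Tendsto (fun z => iteratedFDeriv ℝ k u₂ z)
        (𝓝[upperHalfDisk \ {0}] 0) (𝓝 0)) ∧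
    (∀ m : ℕ, (fun z => u₂ z) =O[𝓝[upperHalfDisk \ {0}] 0] (fun z => z ^ m)) := by
  -- common notation
  set v : ℂ → ℂ := fun z => (z ^ ((1:ℂ)/3))⁻¹ with hv_def
  have hsec_ne : sectorS \ {0} ⊆ {(0:ℂ)}ᶜ := fun w hw => hw.2
  have hupper_ne : upperHalfDisk \ {0} ⊆ {(0:ℂ)}ᶜ := fun z hz => hz.2
  have hslit_ne : Complex.slitPlane ⊆ {(0:ℂ)}ᶜ := fun z hz =>
    (Complex.mem_slitPlane_iff_arg.mp hz).2
  have hvre : ∀ z : ℂ, z ≠ 0 → ‖v z‖ / 2 ≤ (v z).re := fun z hz =>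
    aux_inv_re_half (aux_upow_ne hz) (aux_ure hz)
  have hfun : u₂ = (fun z : ℂ => Complex.exp (-v z)) := rfl
  refine ⟨?_, ?_, ?_⟩
  · -- Part 1: sector
    intro k
    have hv1 : ∀ w ∈ {w : ℂ | w ≠ 0}, HasDerivAt (fun w : ℂ => w⁻¹) ((-1:ℂ) * (w⁻¹)^2) w := by
      intro w hw
      have h := hasDerivAt_inv hw
      refine h.congr_deriv ?_
      rw [inv_pow]; ring
    exact aux_good_tendsto isOpen_ne hv1 aux_smooth1 hsec_ne
      (aux_tendsto_norm_inv.mono_left (nhdsWithin_mono _ hsec_ne))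
      (fun w hw => aux_inv_re_half hw.2 (aux_sector_re hw.1 hw.2)) k
  · -- Part 2: upper half disk
    have hvslit : ∀ z ∈ Complex.slitPlane, HasDerivAt v ((-(1/3):ℂ) * (v z) ^ 4) z :=
      fun z hz => aux_v_hasDeriv hz
    have T2 : ∀ k : ℕ, Tendsto (fun z => iteratedFDeriv ℝ k u₂ z)
        (𝓝[Complex.slitPlane] 0) (𝓝 0) := by
      intro k
      rw [hfun]
      exact aux_good_tendsto Complex.isOpen_slitPlane hvslit aux_smooth2 (subset_refl _)
        (aux_tendsto_norm_v.mono_left (nhdsWithin_mono _ hslit_ne))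
        (fun z hz => hvre z (hslit_ne hz)) k
    intro k
    match k with
    | 0 =>
      -- direct estimate, valid also on the negative real axis
      have hdecay := aux_decay 1 (l := 𝓝[upperHalfDisk \ {0}] 0) (v := v)
          (by filter_upwards [self_mem_nhdsWithin] with z hz
              exact hvre z (hupper_ne hz))
          (aux_tendsto_norm_v.mono_left (nhdsWithin_mono _ hupper_ne))
      have hdn := hdecay.norm
      rw [norm_zero] at hdn
      apply squeeze_zero_norm' _ hdn
      filter_upwards [self_mem_nhdsWithin] with z _
      rw [norm_iteratedFDeriv_zero]
      simp only [hfun, Polynomial.eval_one, one_mul]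
      exact le_refl _
    | (j+1) =>
      rw [Metric.tendsto_nhdsWithin_nhds]
      intro ε hε
      obtain ⟨δ, hδpos, hδ⟩ := Metric.tendsto_nhdsWithin_nhds.mp (T2 (j+1)) (ε/5)
        (by positivity)
      refine ⟨δ, hδpos, ?_⟩
      intro z hz hdist
      have hz0 : z ≠ 0 := hupper_ne hz
      by_cases hsp : z ∈ Complex.slitPlane
      · have h := hδ hsp hdist
        calc dist (iteratedFDeriv ℝ (j+1) u₂ z) 0 < ε/5 := h
          _ < ε := by linarith
      · -- z is on the negative real axis
        rw [Complex.mem_slitPlane_iff] at hsp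
        push_neg at hsp
        have him : z.im = 0 := hsp.2
        set r : ℝ := δ - dist z 0 with hr
        have hrpos : 0 < r := by rw [hr]; linarith
        have hball : ∀ w ∈ ball z r, w.im ≠ 0 →
            DifferentiableAt ℝ (iteratedFDeriv ℝ j u₂) w ∧
              ‖fderiv ℝ (iteratedFDeriv ℝ j u₂) w‖ ≤ ε/5 := by
          intro w hwball hwim
          have hwsp : w ∈ Complex.slitPlane := Complex.mem_slitPlane_iff.mpr (Or.inr hwim)
          have hwdist : dist w 0 < δ := by
            have h1 := mem_ball.mp hwball
            calc dist w 0 ≤ dist w z + dist z 0 := dist_triangle _ _ _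
              _ < r + dist z 0 := by linarith
              _ = δ := by rw [hr]; ring
          constructor
          · have hR : ContDiffOn ℝ ⊤ (fun z : ℂ => Complex.exp (-(z ^ ((1:ℂ)/3))⁻¹))
                Complex.slitPlane := aux_smooth2.restrict_scalars ℝ
            have hdOn : DifferentiableOn ℝ
                (iteratedFDerivWithin ℝ j (fun z : ℂ => Complex.exp (-(z ^ ((1:ℂ)/3))⁻¹))
                  Complex.slitPlane) Complex.slitPlane :=
              hR.differentiableOn_iteratedFDerivWithin (by simp)
                Complex.isOpen_slitPlane.uniqueDiffOn
            have hEq : iteratedFDeriv ℝ j u₂ =ᶠ[𝓝 w]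
                iteratedFDerivWithin ℝ j u₂ Complex.slitPlane := by
              filter_upwards [Complex.isOpen_slitPlane.mem_nhds hwsp] with y hy
              exact (iteratedFDerivWithin_of_isOpen j Complex.isOpen_slitPlane hy).symm
            have hdAt : DifferentiableAt ℝ
                (iteratedFDerivWithin ℝ j u₂ Complex.slitPlane) w :=
              ((hdOn w hwsp).differentiableAt
                (Complex.isOpen_slitPlane.mem_nhds hwsp))
            exact hdAt.congr_of_eventuallyEq hEq
          · rw [norm_fderiv_iteratedFDeriv]
            have h := hδ hwsp hwdist
            rw [dist_eq_norm, sub_zero] at h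
            exact le_of_lt h
        have hbad := aux_badPoint_bound hrpos (by positivity) hball him
        rw [dist_eq_norm, sub_zero]
        calc ‖iteratedFDeriv ℝ (j+1) u₂ z‖
            = ‖fderiv ℝ (iteratedFDeriv ℝ j u₂) z‖ := (norm_fderiv_iteratedFDeriv).symm
          _ ≤ 4 * (ε/5) := hbad
          _ < ε := by linarith
  · -- Part 3: big-O
    intro m
    rw [Asymptotics.isBigO_iff]
    refine ⟨1, ?_⟩
    have hratio : Tendsto (fun z => ‖u₂ z‖ / ‖z ^ m‖) (𝓝[upperHalfDisk \ {0}] 0) (𝓝 0) := by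
      have hbound := (aux_pow_mul_exp_half (3*m)).comp
        (aux_tendsto_norm_v.mono_left (nhdsWithin_mono _ hupper_ne))
      apply squeeze_zero' ?_ ?_ hbound
      · filter_upwards [self_mem_nhdsWithin] with z _
        positivity
      · filter_upwards [self_mem_nhdsWithin] with z hz
        have hz0 : z ≠ 0 := hupper_ne hz
        have e1 : ‖z ^ m‖⁻¹ = ‖v z‖ ^ (3*m) := by
          simp only [hv_def]
          have h4 : ‖z‖ = ‖z ^ ((1:ℂ)/3)‖ ^ 3 := by
            rw [← norm_pow, aux_ucube hz0]
          rw [norm_pow, h4, ← pow_mul, norm_inv, inv_pow]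
        have e2 : ‖u₂ z‖ ≤ Real.exp (-(‖v z‖/2)) := by
          rw [hfun]
          show ‖Complex.exp (-v z)‖ ≤ _
          rw [Complex.norm_exp]
          apply Real.exp_le_exp.mpr
          have := hvre z hz0
          simp only [Complex.neg_re]
          linarith
        calc ‖u₂ z‖ / ‖z ^ m‖ = ‖u₂ z‖ * ‖z ^ m‖⁻¹ := div_eq_mul_inv _ _
          _ ≤ Real.exp (-(‖v z‖/2)) * ‖z ^ m‖⁻¹ :=
              mul_le_mul_of_nonneg_right e2 (inv_nonneg.mpr (norm_nonneg _))
          _ = ‖v z‖ ^ (3*m) * Real.exp (-(‖v z‖/2)) := by rw [e1]; ring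
    have hev : ∀ᶠ z in 𝓝[upperHalfDisk \ {0}] 0, ‖u₂ z‖ / ‖z ^ m‖ < 1 :=
      hratio.eventually_lt_const one_pos
    filter_upwards [hev, self_mem_nhdsWithin] with z h1 hz
    have hz0 : z ≠ 0 := hupper_ne hz
    have hpos : (0:ℝ) < ‖z ^ m‖ := by
      rw [norm_pow]
      exact pow_pos (norm_pos_iff.mpr hz0) m
    rw [one_mul]
    exact le_of_lt ((div_lt_one hpos).mp h1)
end
end

section
/- Let u₀ : (Δ, 0) → (ℝ^{2n}, 0) satisfy the normal form u₀(ζ) = ζ^μ P(ζ) + ζ^{2μ-1} v(ζ) with P a polynomial of degree ≤ μ - 1, P(0) = v₀ ≠ 0, v ∈ L^{1,p}_loc with v(0) = 0 and the estimates ‖d(ζv)‖ = O(|ζ|^α). Then the differential satisfies du₀(ζ) = μ v₀ ζ^{μ-1} + O(|ζ|^{μ-1+α}) as ζ → 0, for any 0 < α < 1 with α = 1 - 2/p. -/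
open Complex Metric Filter Asymptotics
open scoped Topology

noncomputable section

abbrev Cn (n : ℕ) := EuclideanSpace ℂ (Fin n)

/-- The real-linear map `ℂ → ℂⁿ`, `w ↦ (c w) • v₀`. -/
def mulSmul (n : ℕ) (c : ℂ) (v₀ : Cn n) : ℂ →L[ℝ] Cn n :=
  (ContinuousLinearMap.id ℝ ℂ).smulRight (c • v₀)

lemma mulSmul_norm_le (n : ℕ) (c : ℂ) (v : Cn n) : ‖mulSmul n c v‖ ≤ ‖c‖ * ‖v‖ := by
  apply ContinuousLinearMap.opNorm_le_bound _ (by positivity)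
  intro x
  simp only [mulSmul, ContinuousLinearMap.smulRight_apply, ContinuousLinearMap.id_apply]
  rw [norm_smul, norm_smul]
  exact le_of_eq (by ring)

lemma mono_hasFDerivAt (n : ℕ) (k : ℕ) (c : Cn n) (ζ : ℂ) :
    HasFDerivAt (fun z : ℂ => z ^ k • c) (mulSmul n ((k : ℂ) * ζ ^ (k - 1)) c) ζ := by
  have h := (((hasDerivAt_pow k ζ).smul_const c).hasFDerivAt).restrictScalars ℝ
  exact h

lemma pow_le_rpow_aux {x : ℝ} (hx0 : 0 ≤ x) (hx1 : x ≤ 1) {m : ℕ} {t : ℝ}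
    (ht : 0 < t) (h : t ≤ m) : x ^ m ≤ x ^ t := by
  rcases hx0.eq_or_lt with h0 | h0
  · have hm : m ≠ 0 := by
      rintro rfl; simp at h; linarith
    rw [← h0, Real.zero_rpow ht.ne', zero_pow hm]
  · rw [← Real.rpow_natCast x m]
    exact Real.rpow_le_rpow_of_exponent_ge h0 hx1 h

lemma pow_mul_rpow_le_aux {x : ℝ} (hx0 : 0 ≤ x) (hx1 : x ≤ 1) {m : ℕ} {s t : ℝ}
    (hs : 0 < s) (ht : 0 < t) (h : t ≤ m + s) : x ^ m * x ^ s ≤ x ^ t := by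
  rcases hx0.eq_or_lt with h0 | h0
  · rw [← h0, Real.zero_rpow hs.ne', Real.zero_rpow ht.ne', mul_zero]
  · rw [← Real.rpow_natCast x m, ← Real.rpow_add h0]
    exact Real.rpow_le_rpow_of_exponent_ge h0 hx1 h

set_option maxHeartbeats 1000000 in
/-- **Differentiated normal form.** If `u₀(ζ) = ζ^μ P(ζ) + ζ^{2μ-1} v(ζ)` with
`P(ζ) = Σ_{i<μ} aᵢ ζ^i` a polynomial of degree `≤ μ-1`, `P(0) = v₀ ≠ 0`, `v(0) = 0`
and `‖d(ζ v(ζ))‖ = O(|ζ|^α)` with `α = 1 - 2/p`, then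
`du₀(ζ) = μ v₀ ζ^{μ-1} + O(|ζ|^{μ-1+α})` as `ζ → 0`. -/
theorem differentiated_normal_form
    (n : ℕ) (p : ℝ) (hp : 2 < p) (α : ℝ) (hα : α = 1 - 2 / p)
    (μ : ℕ) (hμ : 1 ≤ μ)
    (a : Fin μ → Cn n) (v₀ : Cn n)
    (hP0 : a ⟨0, hμ⟩ = v₀) (hv₀ : v₀ ≠ 0)
    (v u₀ : ℂ → Cn n) (hv0 : v 0 = 0)
    (hvdiff : ∀ᶠ ζ in 𝓝 (0 : ℂ), DifferentiableAt ℝ (fun z : ℂ => z • v z) ζ)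
    (hvest : (fun ζ => fderiv ℝ (fun z : ℂ => z • v z) ζ)
      =O[𝓝 (0 : ℂ)] (fun ζ => ‖ζ‖ ^ α))
    (hudiff : ∀ᶠ ζ in 𝓝 (0 : ℂ), DifferentiableAt ℝ u₀ ζ)
    (hform : ∀ᶠ ζ in 𝓝 (0 : ℂ),
      u₀ ζ = ζ ^ μ • (∑ i : Fin μ, ζ ^ (i : ℕ) • a i) + ζ ^ (2 * μ - 1) • v ζ) :
    (fun ζ : ℂ => fderiv ℝ u₀ ζ - mulSmul n ((μ : ℂ) * ζ ^ (μ - 1)) v₀)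
      =O[𝓝 (0 : ℂ)] (fun ζ => ‖ζ‖ ^ ((μ : ℝ) - 1 + α)) := by
  have hp0 : 0 < p := by linarith
  have hα0 : 0 < α := by
    rw [hα]
    have : 2 / p < 1 := (div_lt_one hp0).2 hp
    linarith
  have hα1 : α < 1 := by
    rw [hα]
    have : 0 < 2 / p := by positivity
    linarith
  set e : ℝ := (μ : ℝ) - 1 + α with he_def
  have he0 : 0 < e := by
    have : (1 : ℝ) ≤ (μ : ℝ) := by exact_mod_cast hμ
    simp only [he_def]; linarith
  set w : ℂ → Cn n := fun z => z • v z with hw_def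
  set k : ℕ := 2 * μ - 2 with hk_def
  set g : ℂ → Cn n := fun z => z ^ k • w z with hg_def
  set Q : ℂ → Cn n := fun z => ∑ i : Fin μ, z ^ (μ + (i : ℕ)) • a i with hQ_def
  set L : ℂ → (ℂ →L[ℝ] Cn n) := fun z =>
    ∑ i : Fin μ, mulSmul n (((μ + (i : ℕ) : ℕ) : ℂ) * z ^ (μ + (i : ℕ) - 1)) (a i) with hL_def
  set T : ℂ → (ℂ →L[ℝ] Cn n) := fun z => mulSmul n ((μ : ℂ) * z ^ (μ - 1)) v₀ with hT_def
  -- derivative of Q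
  have hQd : ∀ ζ : ℂ, HasFDerivAt Q (L ζ) ζ := fun ζ =>
    HasFDerivAt.fun_sum fun i _ => mono_hasFDerivAt n (μ + (i : ℕ)) (a i) ζ
  -- normal form rewritten
  have hform' : ∀ᶠ ζ in 𝓝 (0 : ℂ), u₀ ζ = Q ζ + g ζ := by
    filter_upwards [hform] with ζ h
    rw [h]
    congr 1
    · rw [Finset.smul_sum]
      exact Finset.sum_congr rfl fun i _ => by rw [smul_smul, ← pow_add]
    · simp only [hg_def, hw_def, smul_smul]
      congr 1
      rw [← pow_succ]
      congr 1
      omega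
  -- constants from hvest
  obtain ⟨c', hc⟩ := hvest.bound
  rw [Metric.eventually_nhds_iff] at hc hvdiff
  obtain ⟨r₁, hr₁, hc⟩ := hc
  obtain ⟨r₂, hr₂, hvd⟩ := hvdiff
  set c : ℝ := max c' 0 with hc_def
  have hc0 : 0 ≤ c := le_max_right _ _
  have hc'c : c' ≤ c := le_max_left _ _
  set r : ℝ := min (min r₁ r₂) 1 with hr_def
  have hr0 : 0 < r := lt_min (lt_min hr₁ hr₂) one_pos
  have hrr₁ : r ≤ r₁ := le_trans (min_le_left _ _) (min_le_left _ _)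
  have hrr₂ : r ≤ r₂ := le_trans (min_le_left _ _) (min_le_right _ _)
  have hr1 : r ≤ 1 := min_le_right _ _
  -- pointwise bounds inside ball 0 r
  have hwdiff : ∀ z : ℂ, ‖z‖ < r → DifferentiableAt ℝ w z := by
    intro z hz
    exact hvd (by simpa using lt_of_lt_of_le hz hrr₂)
  have hwest : ∀ z : ℂ, ‖z‖ < r → ‖fderiv ℝ w z‖ ≤ c * ‖z‖ ^ α := by
    intro z hz
    have := hc (y := z) (by simpa using lt_of_lt_of_le hz hrr₁)
    calc ‖fderiv ℝ w z‖ ≤ c' * ‖‖z‖ ^ α‖ := this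
      _ ≤ c * ‖‖z‖ ^ α‖ := mul_le_mul_of_nonneg_right hc'c (norm_nonneg _)
      _ = c * ‖z‖ ^ α := by
          rw [Real.norm_eq_abs, _root_.abs_of_nonneg (Real.rpow_nonneg (norm_nonneg _) _)]
  -- bound on w itself
  have hw0 : w 0 = 0 := by simp [hw_def]
  have hwbd : ∀ ζ : ℂ, ‖ζ‖ < r → ‖w ζ‖ ≤ c * ‖ζ‖ ^ (1 + α) := by
    intro ζ hζ
    have hmem : ∀ z : ℂ, z ∈ closedBall (0 : ℂ) ‖ζ‖ → ‖z‖ < r := by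
      intro z hz
      rw [mem_closedBall, dist_zero_right] at hz
      exact lt_of_le_of_lt hz hζ
    have h1 : ∀ z ∈ closedBall (0 : ℂ) ‖ζ‖, DifferentiableAt ℝ w z :=
      fun z hz => hwdiff z (hmem z hz)
    have h2 : ∀ z ∈ closedBall (0 : ℂ) ‖ζ‖, ‖fderiv ℝ w z‖ ≤ c * ‖ζ‖ ^ α := by
      intro z hz
      refine le_trans (hwest z (hmem z hz)) ?_
      have hzζ : ‖z‖ ≤ ‖ζ‖ := by rwa [mem_closedBall, dist_zero_right] at hz
      exact mul_le_mul_of_nonneg_left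
        (Real.rpow_le_rpow (norm_nonneg _) hzζ hα0.le) hc0
    have := Convex.norm_image_sub_le_of_norm_fderiv_le h1 h2 (convex_closedBall _ _)
      (x := 0) (y := ζ) (by simp) (by simp [mem_closedBall, dist_zero_right])
    rw [hw0, sub_zero, sub_zero] at this
    calc ‖w ζ‖ ≤ c * ‖ζ‖ ^ α * ‖ζ‖ := this
      _ = c * ‖ζ‖ ^ (1 + α) := by
          rcases eq_or_ne ζ 0 with rfl | hζ0
          · simp [Real.zero_rpow hα0.ne', Real.zero_rpow (by positivity : (1 + α) ≠ 0)]
          · rw [Real.rpow_add (norm_pos_iff.2 hζ0), Real.rpow_one]; ring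
  -- derivative of g
  have hgd : ∀ ζ : ℂ, ‖ζ‖ < r → HasFDerivAt g
      ((ζ ^ k) • fderiv ℝ w ζ +
        (ContinuousLinearMap.restrictScalars ℝ
          ((1 : ℂ →L[ℂ] ℂ).smulRight ((k : ℂ) * ζ ^ (k - 1)))).smulRight (w ζ)) ζ := by
    intro ζ hζ
    have hcd : HasFDerivAt (fun z : ℂ => z ^ k)
        (ContinuousLinearMap.restrictScalars ℝ
          ((1 : ℂ →L[ℂ] ℂ).smulRight ((k : ℂ) * ζ ^ (k - 1)))) ζ :=
      ((hasDerivAt_pow k ζ).hasFDerivAt).restrictScalars ℝ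
    exact hcd.smul ((hwdiff ζ hζ).hasFDerivAt)
  -- bound the derivative of g
  have hgbd : ∀ ζ : ℂ, ‖ζ‖ < r →
      ‖(ζ ^ k) • fderiv ℝ w ζ +
        (ContinuousLinearMap.restrictScalars ℝ
          ((1 : ℂ →L[ℂ] ℂ).smulRight ((k : ℂ) * ζ ^ (k - 1)))).smulRight (w ζ)‖
      ≤ (c + (k : ℝ) * c) * ‖ζ‖ ^ e := by
    intro ζ hζ
    have hζ0 : (0:ℝ) ≤ ‖ζ‖ := norm_nonneg _
    have hζ1 : ‖ζ‖ ≤ 1 := le_of_lt (lt_of_lt_of_le hζ hr1)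
    have hke : e ≤ (k : ℝ) + α := by
      simp only [he_def, hk_def]
      have : (μ : ℝ) - 1 ≤ ((2 * μ - 2 : ℕ) : ℝ) := by
        have : ((2 * μ - 2 : ℕ) : ℝ) = 2 * (μ : ℝ) - 2 := by
          have : (2 : ℕ) ≤ 2 * μ := by omega
          push_cast [Nat.cast_sub this]
          ring
        rw [this]
        have : (1 : ℝ) ≤ (μ : ℝ) := by exact_mod_cast hμ
        linarith
      linarith
    have t1 : ‖(ζ ^ k) • fderiv ℝ w ζ‖ ≤ c * ‖ζ‖ ^ e := by
      rw [norm_smul (ζ ^ k) (fderiv ℝ w ζ), norm_pow]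
      calc ‖ζ‖ ^ k * ‖fderiv ℝ w ζ‖ ≤ ‖ζ‖ ^ k * (c * ‖ζ‖ ^ α) :=
            mul_le_mul_of_nonneg_left (hwest ζ hζ) (by positivity)
        _ = c * (‖ζ‖ ^ k * ‖ζ‖ ^ α) := by ring
        _ ≤ c * ‖ζ‖ ^ e :=
            mul_le_mul_of_nonneg_left
              (pow_mul_rpow_le_aux hζ0 hζ1 hα0 he0 hke) hc0
    have t2 : ‖(ContinuousLinearMap.restrictScalars ℝ
          ((1 : ℂ →L[ℂ] ℂ).smulRight ((k : ℂ) * ζ ^ (k - 1)))).smulRight (w ζ)‖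
        ≤ (k : ℝ) * c * ‖ζ‖ ^ e := by
      have hA : ‖(ContinuousLinearMap.restrictScalars ℝ
          ((1 : ℂ →L[ℂ] ℂ).smulRight ((k : ℂ) * ζ ^ (k - 1))))‖ ≤ (k : ℝ) * ‖ζ‖ ^ (k - 1) := by
        apply ContinuousLinearMap.opNorm_le_bound _ (by positivity)
        intro x
        simp only [ContinuousLinearMap.coe_restrictScalars',
          ContinuousLinearMap.smulRight_apply, ContinuousLinearMap.one_apply]
        rw [smul_eq_mul, norm_mul, norm_mul, norm_pow, Complex.norm_natCast]
        ring_nf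
        exact le_of_eq (by ring)
      calc ‖_‖ ≤ ‖(ContinuousLinearMap.restrictScalars ℝ
            ((1 : ℂ →L[ℂ] ℂ).smulRight ((k : ℂ) * ζ ^ (k - 1))))‖ * ‖w ζ‖ :=
            (ContinuousLinearMap.norm_smulRight_apply _ _).le
        _ ≤ ((k : ℝ) * ‖ζ‖ ^ (k - 1)) * (c * ‖ζ‖ ^ (1 + α)) :=
            mul_le_mul hA (hwbd ζ hζ) (norm_nonneg _) (by positivity)
        _ ≤ (k : ℝ) * c * ‖ζ‖ ^ e := by
            rcases Nat.eq_zero_or_pos k with hk0 | hk0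
            · simp [hk0]
            · have : ‖ζ‖ ^ (k - 1) * ‖ζ‖ ^ (1 + α) ≤ ‖ζ‖ ^ e := by
                apply pow_mul_rpow_le_aux hζ0 hζ1 (by positivity) he0
                have : ((k - 1 : ℕ) : ℝ) = (k : ℝ) - 1 := by
                  push_cast [Nat.cast_sub hk0]; ring
                rw [this]
                linarith
              calc (k : ℝ) * ‖ζ‖ ^ (k - 1) * (c * ‖ζ‖ ^ (1 + α))
                  = (k : ℝ) * c * (‖ζ‖ ^ (k - 1) * ‖ζ‖ ^ (1 + α)) := by ring
                _ ≤ (k : ℝ) * c * ‖ζ‖ ^ e := by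
                    apply mul_le_mul_of_nonneg_left this (by positivity)
    calc ‖_ + _‖ ≤ _ + _ := norm_add_le _ _
      _ ≤ c * ‖ζ‖ ^ e + (k : ℝ) * c * ‖ζ‖ ^ e := add_le_add t1 t2
      _ = (c + (k : ℝ) * c) * ‖ζ‖ ^ e := by ring
  -- bound on L - T
  set S : ℝ := ∑ i : Fin μ, ((μ + (i : ℕ) : ℕ) : ℝ) * ‖a i‖ with hS_def
  have hS0 : 0 ≤ S := Finset.sum_nonneg fun i _ => by positivity
  have hLT : ∀ ζ : ℂ, ‖ζ‖ ≤ 1 → ‖L ζ - T ζ‖ ≤ S * ‖ζ‖ ^ e := by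
    intro ζ hζ1
    have hζ0 : (0:ℝ) ≤ ‖ζ‖ := norm_nonneg _
    set i0 : Fin μ := ⟨0, hμ⟩ with hi0
    have hsplit : L ζ - T ζ = ∑ i ∈ Finset.univ.erase i0,
        mulSmul n (((μ + (i : ℕ) : ℕ) : ℂ) * ζ ^ (μ + (i : ℕ) - 1)) (a i) := by
      have := Finset.sum_erase_add Finset.univ
        (fun i : Fin μ => mulSmul n (((μ + (i : ℕ) : ℕ) : ℂ) * ζ ^ (μ + (i : ℕ) - 1)) (a i))
        (Finset.mem_univ i0)
      have hT0 : mulSmul n (((μ + (i0 : ℕ) : ℕ) : ℂ) * ζ ^ (μ + (i0 : ℕ) - 1)) (a i0) = T ζ := by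
        simp only [hi0, hT_def, hP0]
        norm_num
        rw [show a ⟨0, hμ⟩ = v₀ from hP0]
      rw [hL_def]
      simp only [← this, hT0]
      abel
    rw [hsplit]
    calc ‖∑ i ∈ Finset.univ.erase i0,
          mulSmul n (((μ + (i : ℕ) : ℕ) : ℂ) * ζ ^ (μ + (i : ℕ) - 1)) (a i)‖
        ≤ ∑ i ∈ Finset.univ.erase i0,
          ‖mulSmul n (((μ + (i : ℕ) : ℕ) : ℂ) * ζ ^ (μ + (i : ℕ) - 1)) (a i)‖ :=
          norm_sum_le _ _
      _ ≤ ∑ i ∈ Finset.univ.erase i0, ((μ + (i : ℕ) : ℕ) : ℝ) * ‖a i‖ * ‖ζ‖ ^ e := by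
          apply Finset.sum_le_sum
          intro i hi
          have hine : (i : ℕ) ≠ 0 := by
            intro h
            apply Finset.ne_of_mem_erase hi
            simp only [hi0]
            exact Fin.ext h
          calc ‖mulSmul n (((μ + (i : ℕ) : ℕ) : ℂ) * ζ ^ (μ + (i : ℕ) - 1)) (a i)‖
              ≤ ‖((μ + (i : ℕ) : ℕ) : ℂ) * ζ ^ (μ + (i : ℕ) - 1)‖ * ‖a i‖ :=
                mulSmul_norm_le _ _ _
            _ = ((μ + (i : ℕ) : ℕ) : ℝ) * ‖ζ‖ ^ (μ + (i : ℕ) - 1) * ‖a i‖ := by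
                rw [norm_mul, norm_pow, Complex.norm_natCast]
            _ ≤ ((μ + (i : ℕ) : ℕ) : ℝ) * ‖a i‖ * ‖ζ‖ ^ e := by
                have hexp : ‖ζ‖ ^ (μ + (i : ℕ) - 1) ≤ ‖ζ‖ ^ e := by
                  apply pow_le_rpow_aux hζ0 hζ1 he0
                  have hge : μ ≤ μ + (i : ℕ) - 1 := by omega
                  have : (1:ℝ) ≤ (μ:ℝ) := by exact_mod_cast hμ
                  have : (μ:ℝ) ≤ ((μ + (i : ℕ) - 1 : ℕ) : ℝ) := by exact_mod_cast hge
                  simp only [he_def]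
                  linarith
                calc ((μ + (i : ℕ) : ℕ) : ℝ) * ‖ζ‖ ^ (μ + (i : ℕ) - 1) * ‖a i‖
                    = ((μ + (i : ℕ) : ℕ) : ℝ) * ‖a i‖ * ‖ζ‖ ^ (μ + (i : ℕ) - 1) := by ring
                  _ ≤ ((μ + (i : ℕ) : ℕ) : ℝ) * ‖a i‖ * ‖ζ‖ ^ e :=
                      mul_le_mul_of_nonneg_left hexp (by positivity)
      _ ≤ S * ‖ζ‖ ^ e := by
          rw [hS_def, Finset.sum_mul]
          apply Finset.sum_le_sum_of_subset_of_nonneg (Finset.erase_subset _ _)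
          intro i _ _
          positivity
  -- assemble
  rw [Asymptotics.isBigO_iff]
  refine ⟨S + (c + (k : ℝ) * c), ?_⟩
  have hball : ∀ᶠ ζ in 𝓝 (0 : ℂ), ‖ζ‖ < r :=
    Metric.eventually_nhds_iff.2 ⟨r, hr0, fun {y} hy => by simpa using hy⟩
  filter_upwards [hball, hform'.eventually_nhds] with ζ hζ hloc
  have hζ1 : ‖ζ‖ ≤ 1 := le_of_lt (lt_of_lt_of_le hζ hr1)
  have hu : HasFDerivAt u₀ (L ζ + ((ζ ^ k) • fderiv ℝ w ζ +
      (ContinuousLinearMap.restrictScalars ℝ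
        ((1 : ℂ →L[ℂ] ℂ).smulRight ((k : ℂ) * ζ ^ (k - 1)))).smulRight (w ζ))) ζ := by
    have h := (hQd ζ).add (hgd ζ hζ)
    apply h.congr_of_eventuallyEq
    filter_upwards [hloc] with z hz
    exact hz
  rw [hu.fderiv]
  have : L ζ + ((ζ ^ k) • fderiv ℝ w ζ +
      (ContinuousLinearMap.restrictScalars ℝ
        ((1 : ℂ →L[ℂ] ℂ).smulRight ((k : ℂ) * ζ ^ (k - 1)))).smulRight (w ζ)) - T ζ
      = (L ζ - T ζ) + ((ζ ^ k) • fderiv ℝ w ζ +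
      (ContinuousLinearMap.restrictScalars ℝ
        ((1 : ℂ →L[ℂ] ℂ).smulRight ((k : ℂ) * ζ ^ (k - 1)))).smulRight (w ζ)) :=
    add_sub_right_comm _ _ _
  rw [show mulSmul n ((μ : ℂ) * ζ ^ (μ - 1)) v₀ = T ζ from rfl, this]
  have hnorm : ‖‖ζ‖ ^ e‖ = ‖ζ‖ ^ e := by
    rw [Real.norm_eq_abs, _root_.abs_of_nonneg (Real.rpow_nonneg (norm_nonneg _) _)]
  rw [hnorm]
  calc ‖_ + _‖ ≤ ‖L ζ - T ζ‖ + _ := norm_add_le _ _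
    _ ≤ S * ‖ζ‖ ^ e + (c + (k : ℝ) * c) * ‖ζ‖ ^ e := add_le_add (hLT ζ hζ1) (hgbd ζ hζ)
    _ = (S + (c + (k : ℝ) * c)) * ‖ζ‖ ^ e := by ring
end
end
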